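/- For every nonzero real number a and every (x,y) ∈ ℝ², the map L̃ of Theorem 6.1 satisfies ⟨∂L̃/∂x, ∂L̃/∂x⟩ = 0, ⟨∂L̃/∂y, ∂L̃/∂y⟩ = 0, and ⟨∂L̃/∂x, ∂L̃/∂y⟩ = −1; that is, the induced metric of L̃ is the flat Lorentzian metric −dx⊗dy − dy⊗dx. -/

import Mathlib

open Complex

/-- The index-one Hermitian form `b(z,w) = −conj z₁ · w₁ + conj z₂ · w₂ + conj z₃ · w₃`
on `ℂ³`, over which the pseudo-sphere `S⁵₂(1) = {z : b(z,z) = 1}` and the Hopf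
fibration `π : S⁵₂(1) → CP²₁(4)` are defined. -/
noncomputable def bSph (z w : ℂ × ℂ × ℂ) : ℂ :=
  -(starRingEnd ℂ z.1) * w.1 + (starRingEnd ℂ z.2.1) * w.2.1
    + (starRingEnd ℂ z.2.2) * w.2.2

/-- The horizontal lift `L̃ : ℝ² → ℂ³` of Theorem 6.1 (the timelike first
coordinate carries the `sinh` factor). -/
noncomputable def Lcp (a x y : ℝ) : ℂ × ℂ × ℂ :=
  ((1 / Real.sqrt 3 : ℝ) : ℂ) •
    (((Real.sqrt 2 : ℝ) : ℂ) * Complex.exp (Complex.I * ((x - a ^ 2 * y : ℝ) : ℂ) / (2 * (a : ℂ)))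
        * ((Real.sinh (Real.sqrt 3 * (x + a ^ 2 * y) / (2 * a)) : ℝ) : ℂ),
     Complex.exp (Complex.I * ((a ^ 2 * y - x : ℝ) : ℂ) / (a : ℂ)),
     ((Real.sqrt 2 : ℝ) : ℂ) * Complex.exp (Complex.I * ((x - a ^ 2 * y : ℝ) : ℂ) / (2 * (a : ℂ)))
        * ((Real.cosh (Real.sqrt 3 * (x + a ^ 2 * y) / (2 * a)) : ℝ) : ℂ))

lemma conj_exp_self (z : ℂ) (h : starRingEnd ℂ z = -z) :
    starRingEnd ℂ (Complex.exp z) * Complex.exp z = 1 := by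
  rw [← Complex.exp_conj, ← Complex.exp_add, h, neg_add_cancel, Complex.exp_zero]

lemma re_form (r i : ℝ) : ((r : ℂ) + (i : ℂ) * I).re = r := by simp

lemma pairProd (c : ℝ) (E w w' : ℂ) (hE : starRingEnd ℂ E * E = 1) (p q p' q' : ℝ)
    (hw : w = (c : ℂ) * (E * ((p : ℂ) * I + (q : ℂ))))
    (hw' : w' = (c : ℂ) * (E * ((p' : ℂ) * I + (q' : ℂ)))) :
    starRingEnd ℂ w * w' =
      ((c ^ 2 * (p * p' + q * q') : ℝ) : ℂ) + ((c ^ 2 * (q * p' - p * q') : ℝ) : ℂ) * I := by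
  subst hw hw'
  simp only [map_mul, map_add, Complex.conj_ofReal, Complex.conj_I]
  push_cast
  linear_combination ((c:ℂ)^2 * ((p:ℂ) * (-I) + q) * ((p':ℂ) * I + q')) * hE +
    (-(c:ℂ)^2 * p * p') * Complex.I_sq

/-- Theorem 6.1: the induced metric of `L̃` is the flat Lorentzian metric
`−dx⊗dy − dy⊗dx`. -/
theorem Lcp_induced_metric (a : ℝ) (ha : a ≠ 0) :
    ∀ x y : ℝ,
      (bSph (deriv (fun t => Lcp a t y) x) (deriv (fun t => Lcp a t y) x)).re = 0 ∧
      (bSph (deriv (fun t => Lcp a x t) y) (deriv (fun t => Lcp a x t) y)).re = 0 ∧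
      (bSph (deriv (fun t => Lcp a t y) x) (deriv (fun t => Lcp a x t) y)).re = -1 := by
  intro x y
  have ha' : (a:ℂ) ≠ 0 := Complex.ofReal_ne_zero.2 ha
  set v : ℝ := Real.sqrt 3 * (x + a ^ 2 * y) / (2 * a) with hv
  set E : ℂ := Complex.exp (Complex.I * ((x - a ^ 2 * y : ℝ) : ℂ) / (2 * (a : ℂ))) with hEdef
  set F : ℂ := Complex.exp (Complex.I * ((a ^ 2 * y - x : ℝ) : ℂ) / (a : ℂ)) with hFdef
  set S : ℝ := Real.sinh v with hS
  set C : ℝ := Real.cosh v with hC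
  set κ : ℝ := 1 / Real.sqrt 3 with hκ
  -- conj-products of the phases
  have hEE : starRingEnd ℂ E * E = 1 := by
    refine conj_exp_self _ ?_
    simp only [map_div₀, map_mul, Complex.conj_I, Complex.conj_ofReal, map_ofNat]
    ring
  have hFF : starRingEnd ℂ F * F = 1 := by
    refine conj_exp_self _ ?_
    simp only [map_div₀, map_mul, Complex.conj_I, Complex.conj_ofReal]
    ring
  -- x-derivative
  have hlin1 : HasDerivAt (fun t : ℝ => Complex.I * ((t - a ^ 2 * y : ℝ) : ℂ) / (2 * (a : ℂ)))
      (Complex.I / (2 * (a:ℂ))) x := by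
    have h0 : HasDerivAt (fun t : ℝ => ((t - a ^ 2 * y : ℝ) : ℂ)) 1 x := by
      simpa only [Complex.ofReal_one] using ((hasDerivAt_id' x).sub_const (a ^ 2 * y)).ofReal_comp
    simpa using (h0.const_mul Complex.I).div_const (2 * (a:ℂ))
  have hexp1 : HasDerivAt
      (fun t : ℝ => Complex.exp (Complex.I * ((t - a ^ 2 * y : ℝ) : ℂ) / (2 * (a : ℂ))))
      (E * (Complex.I / (2 * (a:ℂ)))) x := hlin1.cexp
  have hvlin : HasDerivAt (fun t : ℝ => Real.sqrt 3 * (t + a ^ 2 * y) / (2 * a))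
      (Real.sqrt 3 / (2 * a)) x := by
    simpa using (((hasDerivAt_id x).add_const (a ^ 2 * y)).const_mul (Real.sqrt 3)).div_const (2 * a)
  have hsinh : HasDerivAt (fun t : ℝ => ((Real.sinh (Real.sqrt 3 * (t + a ^ 2 * y) / (2 * a)) : ℝ) : ℂ))
      ((C * (Real.sqrt 3 / (2 * a)) : ℝ) : ℂ) x :=
    by have := ((Real.hasDerivAt_sinh v).comp x hvlin).ofReal_comp; exact this
  have hcosh : HasDerivAt (fun t : ℝ => ((Real.cosh (Real.sqrt 3 * (t + a ^ 2 * y) / (2 * a)) : ℝ) : ℂ))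
      ((S * (Real.sqrt 3 / (2 * a)) : ℝ) : ℂ) x :=
    by have := ((Real.hasDerivAt_cosh v).comp x hvlin).ofReal_comp; exact this
  have hc1 : HasDerivAt (fun t : ℝ =>
      ((Real.sqrt 2 : ℝ) : ℂ) * Complex.exp (Complex.I * ((t - a ^ 2 * y : ℝ) : ℂ) / (2 * (a : ℂ)))
        * ((Real.sinh (Real.sqrt 3 * (t + a ^ 2 * y) / (2 * a)) : ℝ) : ℂ))
      (((Real.sqrt 2 : ℝ) : ℂ) * (E * (Complex.I / (2 * (a:ℂ)))) * ((S : ℝ) : ℂ)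
        + ((Real.sqrt 2 : ℝ) : ℂ) * E * ((C * (Real.sqrt 3 / (2 * a)) : ℝ) : ℂ)) x :=
    (hexp1.const_mul _).mul hsinh
  have hlin2 : HasDerivAt (fun t : ℝ => Complex.I * ((a ^ 2 * y - t : ℝ) : ℂ) / ((a : ℂ)))
      (-Complex.I / (a:ℂ)) x := by
    have h0 : HasDerivAt (fun t : ℝ => ((a ^ 2 * y - t : ℝ) : ℂ)) (-1) x := by
      simpa only [Complex.ofReal_one, Complex.ofReal_neg] using
        ((hasDerivAt_id' x).const_sub (a ^ 2 * y)).ofReal_comp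
    have := (h0.const_mul Complex.I).div_const ((a:ℂ))
    convert this using 1; rfl; ring
  have hc2 : HasDerivAt (fun t : ℝ => Complex.exp (Complex.I * ((a ^ 2 * y - t : ℝ) : ℂ) / ((a : ℂ))))
      (F * (-Complex.I / (a:ℂ))) x := hlin2.cexp
  have hc3 : HasDerivAt (fun t : ℝ =>
      ((Real.sqrt 2 : ℝ) : ℂ) * Complex.exp (Complex.I * ((t - a ^ 2 * y : ℝ) : ℂ) / (2 * (a : ℂ)))
        * ((Real.cosh (Real.sqrt 3 * (t + a ^ 2 * y) / (2 * a)) : ℝ) : ℂ))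
      (((Real.sqrt 2 : ℝ) : ℂ) * (E * (Complex.I / (2 * (a:ℂ)))) * ((C : ℝ) : ℂ)
        + ((Real.sqrt 2 : ℝ) : ℂ) * E * ((S * (Real.sqrt 3 / (2 * a)) : ℝ) : ℂ)) x :=
    (hexp1.const_mul _).mul hcosh
  -- nice form of the x-derivative
  have hDx : HasDerivAt (fun t : ℝ => Lcp a t y)
      (((κ : ℝ) : ℂ) * (E * (((Real.sqrt 2 * S / (2 * a) : ℝ) : ℂ) * I
          + ((Real.sqrt 2 * (Real.sqrt 3 * C) / (2 * a) : ℝ) : ℂ))),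
       ((κ : ℝ) : ℂ) * (F * (((-(1 / a) : ℝ) : ℂ) * I + ((0 : ℝ) : ℂ))),
       ((κ : ℝ) : ℂ) * (E * (((Real.sqrt 2 * C / (2 * a) : ℝ) : ℂ) * I
          + ((Real.sqrt 2 * (Real.sqrt 3 * S) / (2 * a) : ℝ) : ℂ)))) x := by
    have h := (hc1.prodMk (hc2.prodMk hc3)).const_smul ((κ : ℝ) : ℂ)
    convert h using 1
    · rfl
    · rfl
    · rfl
    · rfl
    simp only [Prod.smul_mk, smul_eq_mul, Prod.mk.injEq]
    refine ⟨?_, ?_, ?_⟩ <;> (push_cast; ring)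
  -- y-derivative building blocks
  have hr1 : HasDerivAt (fun t : ℝ => x - a ^ 2 * t) (-(a ^ 2)) y := by
    simpa using ((hasDerivAt_id y).const_mul (a ^ 2)).const_sub x
  have hlin1y : HasDerivAt (fun t : ℝ => Complex.I * ((x - a ^ 2 * t : ℝ) : ℂ) / (2 * (a : ℂ)))
      (-Complex.I * (a : ℂ) / 2) y := by
    have := ((hr1.ofReal_comp).const_mul Complex.I).div_const (2 * (a:ℂ))
    convert this using 1
    · rfl
    push_cast
    field_simp
  have hexp1y : HasDerivAt
      (fun t : ℝ => Complex.exp (Complex.I * ((x - a ^ 2 * t : ℝ) : ℂ) / (2 * (a : ℂ))))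
      (E * (-Complex.I * (a:ℂ) / 2)) y := hlin1y.cexp
  have hvliny : HasDerivAt (fun t : ℝ => Real.sqrt 3 * (x + a ^ 2 * t) / (2 * a))
      (Real.sqrt 3 * a / 2) y := by
    have : HasDerivAt (fun t : ℝ => Real.sqrt 3 * (x + a ^ 2 * t) / (2 * a))
        (Real.sqrt 3 * (a ^ 2 * 1) / (2 * a)) y :=
      ((((hasDerivAt_id y).const_mul (a ^ 2)).const_add x).const_mul (Real.sqrt 3)).div_const (2 * a)
    convert this using 1
    field_simp
  have hsinhy : HasDerivAt (fun t : ℝ => ((Real.sinh (Real.sqrt 3 * (x + a ^ 2 * t) / (2 * a)) : ℝ) : ℂ))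
      ((C * (Real.sqrt 3 * a / 2) : ℝ) : ℂ) y :=
    by have := ((Real.hasDerivAt_sinh v).comp y hvliny).ofReal_comp; exact this
  have hcoshy : HasDerivAt (fun t : ℝ => ((Real.cosh (Real.sqrt 3 * (x + a ^ 2 * t) / (2 * a)) : ℝ) : ℂ))
      ((S * (Real.sqrt 3 * a / 2) : ℝ) : ℂ) y :=
    by have := ((Real.hasDerivAt_cosh v).comp y hvliny).ofReal_comp; exact this
  have hc1y : HasDerivAt (fun t : ℝ =>
      ((Real.sqrt 2 : ℝ) : ℂ) * Complex.exp (Complex.I * ((x - a ^ 2 * t : ℝ) : ℂ) / (2 * (a : ℂ)))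
        * ((Real.sinh (Real.sqrt 3 * (x + a ^ 2 * t) / (2 * a)) : ℝ) : ℂ))
      (((Real.sqrt 2 : ℝ) : ℂ) * (E * (-Complex.I * (a:ℂ) / 2)) * ((S : ℝ) : ℂ)
        + ((Real.sqrt 2 : ℝ) : ℂ) * E * ((C * (Real.sqrt 3 * a / 2) : ℝ) : ℂ)) y :=
    (hexp1y.const_mul _).mul hsinhy
  have hr2 : HasDerivAt (fun t : ℝ => a ^ 2 * t - x) (a ^ 2) y := by
    simpa using ((hasDerivAt_id y).const_mul (a ^ 2)).sub_const x
  have hlin2y : HasDerivAt (fun t : ℝ => Complex.I * ((a ^ 2 * t - x : ℝ) : ℂ) / ((a : ℂ)))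
      (Complex.I * (a : ℂ)) y := by
    have := ((hr2.ofReal_comp).const_mul Complex.I).div_const ((a:ℂ))
    convert this using 1
    · rfl
    push_cast
    field_simp
  have hc2y : HasDerivAt (fun t : ℝ => Complex.exp (Complex.I * ((a ^ 2 * t - x : ℝ) : ℂ) / ((a : ℂ))))
      (F * (Complex.I * (a:ℂ))) y := hlin2y.cexp
  have hc3y : HasDerivAt (fun t : ℝ =>
      ((Real.sqrt 2 : ℝ) : ℂ) * Complex.exp (Complex.I * ((x - a ^ 2 * t : ℝ) : ℂ) / (2 * (a : ℂ)))
        * ((Real.cosh (Real.sqrt 3 * (x + a ^ 2 * t) / (2 * a)) : ℝ) : ℂ))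
      (((Real.sqrt 2 : ℝ) : ℂ) * (E * (-Complex.I * (a:ℂ) / 2)) * ((C : ℝ) : ℂ)
        + ((Real.sqrt 2 : ℝ) : ℂ) * E * ((S * (Real.sqrt 3 * a / 2) : ℝ) : ℂ)) y :=
    (hexp1y.const_mul _).mul hcoshy
  have hDy : HasDerivAt (fun t : ℝ => Lcp a x t)
      (((κ : ℝ) : ℂ) * (E * (((-(Real.sqrt 2 * S * a / 2) : ℝ) : ℂ) * I
          + ((Real.sqrt 2 * (Real.sqrt 3 * C) * a / 2 : ℝ) : ℂ))),
       ((κ : ℝ) : ℂ) * (F * (((a : ℝ) : ℂ) * I + ((0 : ℝ) : ℂ))),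
       ((κ : ℝ) : ℂ) * (E * (((-(Real.sqrt 2 * C * a / 2) : ℝ) : ℂ) * I
          + ((Real.sqrt 2 * (Real.sqrt 3 * S) * a / 2 : ℝ) : ℂ)))) y := by
    have h := (hc1y.prodMk (hc2y.prodMk hc3y)).const_smul ((κ : ℝ) : ℂ)
    convert h using 1
    · rfl
    · rfl
    · rfl
    · rfl
    simp only [Prod.smul_mk, smul_eq_mul, Prod.mk.injEq]
    refine ⟨?_, ?_, ?_⟩ <;> (push_cast; ring)
  -- the derivative values
  rw [hDx.deriv, hDy.deriv]
  have h2 : Real.sqrt 2 ^ 2 = 2 := Real.sq_sqrt (by norm_num)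
  have h3 : Real.sqrt 3 ^ 2 = 3 := Real.sq_sqrt (by norm_num)
  have h3ne : Real.sqrt 3 ≠ 0 := by positivity
  have hcs : C ^ 2 - S ^ 2 = 1 := Real.cosh_sq_sub_sinh_sq v
  clear_value v E F S C κ
  clear hlin1 hexp1 hvlin hsinh hcosh hc1 hlin2 hc2 hc3 hr1 hlin1y hexp1y hvliny hsinhy hcoshy hc1y hr2 hlin2y hc2y hc3y hDx hDy hv hEdef hFdef hS hC
  refine ⟨?_, ?_, ?_⟩
  · simp only [bSph, neg_mul]
    rw [pairProd κ E _ _ hEE (Real.sqrt 2 * S / (2 * a)) (Real.sqrt 2 * (Real.sqrt 3 * C) / (2 * a))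
        (Real.sqrt 2 * S / (2 * a)) (Real.sqrt 2 * (Real.sqrt 3 * C) / (2 * a)) rfl rfl,
      pairProd κ F _ _ hFF (-(1 / a)) 0 (-(1 / a)) 0 rfl rfl,
      pairProd κ E _ _ hEE (Real.sqrt 2 * C / (2 * a)) (Real.sqrt 2 * (Real.sqrt 3 * S) / (2 * a))
        (Real.sqrt 2 * C / (2 * a)) (Real.sqrt 2 * (Real.sqrt 3 * S) / (2 * a)) rfl rfl]
    simp only [Complex.add_re, Complex.neg_re, Complex.ofReal_re, Complex.re_ofReal_mul,
      Complex.I_re, mul_zero, add_zero, neg_zero, zero_add]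
    rw [hκ]
    field_simp
    ring_nf
    rw [h2, h3]
    have hcs' : C ^ 2 = S ^ 2 + 1 := by linarith
    rw [hcs']
    ring
  · simp only [bSph, neg_mul]
    rw [pairProd κ E _ _ hEE (-(Real.sqrt 2 * S * a / 2)) (Real.sqrt 2 * (Real.sqrt 3 * C) * a / 2)
        (-(Real.sqrt 2 * S * a / 2)) (Real.sqrt 2 * (Real.sqrt 3 * C) * a / 2) rfl rfl,
      pairProd κ F _ _ hFF a 0 a 0 rfl rfl,
      pairProd κ E _ _ hEE (-(Real.sqrt 2 * C * a / 2)) (Real.sqrt 2 * (Real.sqrt 3 * S) * a / 2)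
        (-(Real.sqrt 2 * C * a / 2)) (Real.sqrt 2 * (Real.sqrt 3 * S) * a / 2) rfl rfl]
    simp only [Complex.add_re, Complex.neg_re, Complex.ofReal_re, Complex.re_ofReal_mul,
      Complex.I_re, mul_zero, add_zero, neg_zero, zero_add]
    rw [hκ]
    field_simp
    ring_nf
    rw [h2, h3]
    have hcs' : C ^ 2 = S ^ 2 + 1 := by linarith
    rw [hcs']
    ring
  · simp only [bSph, neg_mul]
    rw [pairProd κ E _ _ hEE (Real.sqrt 2 * S / (2 * a)) (Real.sqrt 2 * (Real.sqrt 3 * C) / (2 * a))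
        (-(Real.sqrt 2 * S * a / 2)) (Real.sqrt 2 * (Real.sqrt 3 * C) * a / 2) rfl rfl,
      pairProd κ F _ _ hFF (-(1 / a)) 0 a 0 rfl rfl,
      pairProd κ E _ _ hEE (Real.sqrt 2 * C / (2 * a)) (Real.sqrt 2 * (Real.sqrt 3 * S) / (2 * a))
        (-(Real.sqrt 2 * C * a / 2)) (Real.sqrt 2 * (Real.sqrt 3 * S) * a / 2) rfl rfl]
    simp only [Complex.add_re, Complex.neg_re, Complex.ofReal_re, Complex.re_ofReal_mul,
      Complex.I_re, mul_zero, add_zero, neg_zero, zero_add]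
    rw [hκ]
    have h9 : (1 / Real.sqrt 3 : ℝ) ^ 2 = 1 / 3 := by rw [div_pow, one_pow, h3]
    rw [h9]
    field_simp
    ring_nf
    rw [h2, h3]
    have hcs' : C ^ 2 = S ^ 2 + 1 := by linarith
    rw [hcs']
    ring
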